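/- Fix integers c ≥ 0 and b ≥ 2, and set d = gcd(2, b-1). If a finite nonempty set T of positive integers is [c,b]-good, then all elements of T are congruent modulo d. -/

import Mathlib

/-- The augmented generalized happy function `S_{[c,b]}`: it maps `a` to `c` plus the
sum of the squares of the base-`b` digits of `a`. -/
def S (c b a : ℕ) : ℕ := c + ((Nat.digits b a).map (· ^ 2)).sum


/-- `u ∈ U_{[c,b]}`: `u` is a positive integer that is a periodic point of `S_{[c,b]}`. -/
def inU (c b u : ℕ) : Prop := 0 < u ∧ ∃ m, 0 < m ∧ (S c b)^[m] u = u


/-- A finite set `T` of positive integers is `[c,b]`-good if for each `u ∈ U_{[c,b]}`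
there exist `n, k ≥ 0` such that `S_{[c,b]}^k (t + n) = u` for all `t ∈ T`. -/
def Good (c b : ℕ) (T : Finset ℕ) : Prop :=
  ∀ u, inU c b u → ∃ n k : ℕ, ∀ t ∈ T, (S c b)^[k] (t + n) = u

/-- sum of squares of a list with entries `< b` is at most `len * (b-1)^2`. -/
lemma sumsq_le_of_lt (b : ℕ) : ∀ (l : List ℕ), (∀ x ∈ l, x < b) →
    (l.map (· ^ 2)).sum ≤ l.length * (b - 1) ^ 2 := by
  intro l
  induction l with
  | nil => simp
  | cons x l ih =>
    intro hl
    simp only [List.map_cons, List.sum_cons, List.length_cons]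
    have hx : x ≤ b - 1 := by
      have := hl x (by simp)
      omega
    have h1 : x ^ 2 ≤ (b - 1) ^ 2 := Nat.pow_le_pow_left hx 2
    have h2 := ih (fun y hy => hl y (by simp [hy]))
    calc x ^ 2 + (l.map (· ^ 2)).sum ≤ (b - 1) ^ 2 + l.length * (b - 1) ^ 2 := by omega
      _ = (l.length + 1) * (b - 1) ^ 2 := by ring

lemma S_pos (c b : ℕ) (hb : 2 ≤ b) {a : ℕ} (ha : 0 < a) : 0 < S c b a := by
  unfold S
  have hne : Nat.digits b a ≠ [] := Nat.digits_ne_nil_iff_ne_zero.mpr (by omega)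
  have hlast := Nat.getLast_digit_ne_zero b (m := a) (by omega)
  have hmem : (Nat.digits b a).getLast hne ∈ Nat.digits b a := List.getLast_mem hne
  have hmem2 : ((Nat.digits b a).getLast hne) ^ 2 ∈ (Nat.digits b a).map (· ^ 2) :=
    List.mem_map_of_mem hmem
  have hle : ((Nat.digits b a).getLast hne) ^ 2 ≤ ((Nat.digits b a).map (· ^ 2)).sum :=
    List.single_le_sum (fun x _ => Nat.zero_le x) _ hmem2
  have : 0 < ((Nat.digits b a).getLast hne) ^ 2 := Nat.pow_pos (Nat.pos_of_ne_zero hlast)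
  omega

lemma S_le (c b : ℕ) (hb : 2 ≤ b) {K a : ℕ} (ha : a ≤ b ^ K) :
    S c b a ≤ c + (K + 1) * (b - 1) ^ 2 := by
  have hlen : (Nat.digits b a).length ≤ K + 1 := by
    rcases Nat.eq_zero_or_pos a with rfl | hapos
    · simp
    · rw [Nat.digits_len b a (by omega) (by omega)]
      have : Nat.log b a ≤ Nat.log b (b ^ K) := Nat.log_mono_right ha
      rw [Nat.log_pow (by omega)] at this
      omega
  have := sumsq_le_of_lt b (Nat.digits b a) (fun x hx => Nat.digits_lt_base (by omega) hx)
  unfold S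
  have : (Nat.digits b a).length * (b - 1) ^ 2 ≤ (K + 1) * (b - 1) ^ 2 :=
    Nat.mul_le_mul_right _ hlen
  omega

/-- A fixed bound `M = b ^ ((c+(b-1)^2+1)^4)` closed under `S`. -/
lemma S_closed (c b : ℕ) (hb : 2 ≤ b) {a : ℕ}
    (ha : a ≤ b ^ ((c + (b - 1) ^ 2 + 1) ^ 4)) :
    S c b a ≤ b ^ ((c + (b - 1) ^ 2 + 1) ^ 4) := by
  set s := c + (b - 1) ^ 2 + 1 with hs
  have hs2 : 2 ≤ s := by
    have : 1 ≤ (b - 1) ^ 2 := Nat.one_le_pow _ _ (by omega)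
    omega
  have h1 : S c b a ≤ c + (s ^ 4 + 1) * (b - 1) ^ 2 := S_le c b hb ha
  have h2 : c + (s ^ 4 + 1) * (b - 1) ^ 2 ≤ s + (s ^ 4 + 1) * s := by
    have hc : c ≤ s := by omega
    have hb1 : (b - 1) ^ 2 ≤ s := by omega
    have := Nat.mul_le_mul_left (s ^ 4 + 1) hb1
    omega
  have hss : 2 * 2 * 2 * 2 ≤ s * s * s * s := by
    have h1 := Nat.mul_le_mul hs2 hs2
    have h2 := Nat.mul_le_mul h1 hs2
    exact Nat.mul_le_mul h2 hs2
  have hs4 : 16 ≤ s ^ 4 := by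
    have : s * s * s * s = s ^ 4 := by ring
    omega
  have h3 : s + (s ^ 4 + 1) * s ≤ 2 * s ^ 5 := by
    have h2s : 2 * s ≤ s ^ 4 * s := Nat.mul_le_mul (by omega) (le_refl s)
    have : s ^ 4 * s = s ^ 5 := by ring
    nlinarith
  have h4 : s ^ 5 ≤ 2 ^ (5 * s) := by
    have := Nat.lt_two_pow_self (n := s)
    calc s ^ 5 ≤ (2 ^ s) ^ 5 := Nat.pow_le_pow_left (by omega) 5
      _ = 2 ^ (5 * s) := by rw [← Nat.pow_mul, Nat.mul_comm]
  have h5 : 2 * s ^ 5 ≤ 2 ^ (5 * s + 1) := by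
    calc 2 * s ^ 5 ≤ 2 * 2 ^ (5 * s) := Nat.mul_le_mul_left 2 h4
      _ = 2 ^ (5 * s + 1) := by rw [Nat.pow_succ]; ring
  have h6 : 5 * s + 1 ≤ s ^ 4 := by
    have h8s : 8 * s ≤ s ^ 4 := by
      calc 8 * s = 2 * 2 * 2 * s := by ring
        _ ≤ s * s * s * s := Nat.mul_le_mul (Nat.mul_le_mul (Nat.mul_le_mul hs2 hs2) hs2) (le_refl s)
        _ = s ^ 4 := by ring
    omega
  have h7 : 2 ^ (5 * s + 1) ≤ 2 ^ (s ^ 4) := Nat.pow_le_pow_right (by omega) h6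
  have h8 : 2 ^ (s ^ 4) ≤ b ^ (s ^ 4) := Nat.pow_le_pow_left hb _
  omega

/-- `U_{[c,b]}` is nonempty. -/
lemma exists_inU (c b : ℕ) (hb : 2 ≤ b) : ∃ u, inU c b u := by
  set M := b ^ ((c + (b - 1) ^ 2 + 1) ^ 4) with hM
  have hM1 : 1 ≤ M := Nat.one_le_pow _ _ (by omega)
  have horbit : ∀ i : ℕ, 0 < (S c b)^[i] 1 ∧ (S c b)^[i] 1 ≤ M := by
    intro i
    induction i with
    | zero => simpa using hM1
    | succ i ih =>
      rw [Function.iterate_succ_apply']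
      exact ⟨S_pos c b hb ih.1, S_closed c b hb ih.2⟩
  obtain ⟨i, hi, j, hj, hne, heq⟩ :=
    Finset.exists_ne_map_eq_of_card_lt_of_maps_to
      (s := Finset.range (M + 2)) (t := Finset.range (M + 1))
      (by simp) (fun i _ => Finset.mem_range.mpr (Nat.lt_succ_of_le (horbit i).2))
      (f := fun i => (S c b)^[i] 1)
  wlog hij : i < j generalizing i j
  · exact this j hj i hi (Ne.symm hne) heq.symm (by omega)
  refine ⟨(S c b)^[i] 1, (horbit i).1, j - i, by omega, ?_⟩
  rw [← Function.iterate_add_apply]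
  have : j - i + i = j := by omega
  rw [this, heq]

lemma sumsq_mod_two (l : List ℕ) : (l.map (· ^ 2)).sum ≡ l.sum [MOD 2] := by
  induction l with
  | nil => rfl
  | cons x l ih =>
    simp only [List.map_cons, List.sum_cons]
    have hx : x ^ 2 ≡ x [MOD 2] := by
      unfold Nat.ModEq
      rw [Nat.pow_mod]
      have : x % 2 = 0 ∨ x % 2 = 1 := Nat.mod_two_eq_zero_or_one x
      rcases this with h | h <;> simp [h]
    exact hx.add ih

lemma S_mod_two (c b : ℕ) (hb : b % 2 = 1) (a : ℕ) : S c b a ≡ c + a [MOD 2] := by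
  unfold S
  have h1 : a ≡ (Nat.digits b a).sum [MOD 2] := Nat.modEq_digits_sum 2 b hb a
  have h2 := sumsq_mod_two (Nat.digits b a)
  exact Nat.ModEq.add_left c (h2.trans h1.symm)

lemma iter_mod_two (c b : ℕ) (hb : b % 2 = 1) (k a : ℕ) :
    (S c b)^[k] a ≡ a + k * c [MOD 2] := by
  induction k generalizing a with
  | zero => simp [Nat.ModEq]
  | succ k ih =>
    rw [Function.iterate_succ_apply]
    calc (S c b)^[k] (S c b a) ≡ S c b a + k * c [MOD 2] := ih _
      _ ≡ (c + a) + k * c [MOD 2] := (S_mod_two c b hb a).add_right _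
      _ = a + (k + 1) * c := by ring

theorem stmt_9 (c b : ℕ) (hb : 2 ≤ b) (d : ℕ) (hd : d = Nat.gcd 2 (b - 1))
    (T : Finset ℕ) (hpos : ∀ t ∈ T, 0 < t) (hne : T.Nonempty)
    (h : Good c b T) :
    ∀ t₁ ∈ T, ∀ t₂ ∈ T, t₁ ≡ t₂ [MOD d] := by
  intro t₁ ht₁ t₂ ht₂
  have hdvd2 : d ∣ 2 := hd ▸ Nat.gcd_dvd_left 2 (b - 1)
  have hd12 : d = 1 ∨ d = 2 := (Nat.dvd_prime Nat.prime_two).mp hdvd2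
  rcases hd12 with rfl | rfl
  · exact Nat.modEq_one
  · have hdvd : 2 ∣ b - 1 := hd ▸ Nat.gcd_dvd_right 2 (b - 1)
    have hbodd : b % 2 = 1 := by omega
    obtain ⟨u, hu⟩ := exists_inU c b hb
    obtain ⟨n, k, hk⟩ := h u hu
    have e1 := hk t₁ ht₁
    have e2 := hk t₂ ht₂
    have m1 := iter_mod_two c b hbodd k (t₁ + n)
    have m2 := iter_mod_two c b hbodd k (t₂ + n)
    rw [e1] at m1
    rw [e2] at m2
    unfold Nat.ModEq at m1 m2 ⊢
    omega
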